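/- For each N ≥ 0, the space B_N of barcodes containing at most N intervals is complete under the bottleneck metric. -/

import Mathlib

open scoped ENNReal

/-- `(a,b)` represents the half-open interval `[a,b)` with `0 ≤ a < b < ∞`. -/
def IsBarInterval (p : ℝ × ℝ) : Prop := 0 ≤ p.1 ∧ p.1 < p.2

/-- An element of the extended barcode space `B̄`: a multiset of intervals `[a,b)`
(recorded by its multiplicity function) such that for every `ε > 0` only finitely many
intervals (with multiplicity, each multiplicity being finite) have length `> ε`. -/
structure ExtBarcode where
  mult : ℝ × ℝ → ℕ
  isInterval : ∀ p, mult p ≠ 0 → IsBarInterval p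
  finite_long : ∀ ε : ℝ, 0 < ε → {p | mult p ≠ 0 ∧ ε < p.2 - p.1}.Finite

/-- The `d_∞` cost of matching two (possibly empty) intervals:
`d_∞([a,b),[c,d)) = max (|a-c|, |b-d|)`, `d_∞([a,b),∅) = (b-a)/2`, `d_∞(∅,∅) = 0`. -/
noncomputable def optCost : Option (ℝ × ℝ) → Option (ℝ × ℝ) → ℝ≥0∞
  | some p, some q => ENNReal.ofReal (max |p.1 - q.1| |p.2 - q.2|)
  | some p, none => ENNReal.ofReal ((p.2 - p.1) / 2)
  | none, some q => ENNReal.ofReal ((q.2 - q.1) / 2)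
  | none, none => 0

/-- A matching between two barcodes: a multiset of pairs from `(B₁ ∪ {∅}) × (B₂ ∪ {∅})`,
not containing `(∅,∅)`, in which each interval of `B₁` appears as a first coordinate
with its multiplicity, and each interval of `B₂` as a second coordinate with its
multiplicity. -/
structure BMatching (A B : ExtBarcode) where
  m : Option (ℝ × ℝ) × Option (ℝ × ℝ) → ℕ
  not_both_empty : m (none, none) = 0
  left : ∀ p : ℝ × ℝ, ∑' q : Option (ℝ × ℝ), (m (some p, q) : ℝ≥0∞) = A.mult p
  right : ∀ q : ℝ × ℝ, ∑' p : Option (ℝ × ℝ), (m (p, some q) : ℝ≥0∞) = B.mult q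

/-- The cost of a matching: the sup of `d_∞` over the pairs occurring in it. -/
noncomputable def BMatching.cost {A B : ExtBarcode} (C : BMatching A B) : ℝ≥0∞ :=
  ⨆ c ∈ {c | C.m c ≠ 0}, optCost c.1 c.2

/-- The bottleneck distance `d_B`: infimum of the costs of matchings. -/
noncomputable def bottleneckDist (A B : ExtBarcode) : ℝ≥0∞ :=
  ⨅ C : BMatching A B, C.cost

/-- Total number of intervals of a barcode, counted with multiplicity. -/
noncomputable def ExtBarcode.card (A : ExtBarcode) : ℝ≥0∞ := ∑' p : ℝ × ℝ, (A.mult p : ℝ≥0∞)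

/-- Membership in `B_N`: at most `N` intervals (counted with multiplicity). -/
def ExtBarcode.memBN (N : ℕ) (A : ExtBarcode) : Prop := A.card ≤ N

/-- A barcode is finite (lies in `B = ⋃ B_N`) if it has finitely many intervals. -/
def ExtBarcode.IsFinite (A : ExtBarcode) : Prop := {p | A.mult p ≠ 0}.Finite

theorem optCost_symm (x y : Option (ℝ × ℝ)) : optCost x y = optCost y x := by
  cases x <;> cases y <;> simp [optCost, abs_sub_comm]

theorem optCost_none_le (x y : Option (ℝ × ℝ)) :
    optCost x none ≤ optCost x y + optCost y none := by
  cases x with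
  | none => simp [optCost]
  | some p =>
    cases y with
    | none => simp [optCost]
    | some q =>
      simp only [optCost]
      refine le_trans (ENNReal.ofReal_le_ofReal ?_) ENNReal.ofReal_add_le
      have e1 : p.2 - q.2 ≤ |p.2 - q.2| := le_abs_self _
      have e2 : q.1 - p.1 ≤ |p.1 - q.1| := by rw [abs_sub_comm]; exact le_abs_self _
      have m1 := le_max_left |p.1 - q.1| |p.2 - q.2|
      have m2 := le_max_right |p.1 - q.1| |p.2 - q.2|
      linarith

theorem optCost_triangle_some (x z : Option (ℝ × ℝ)) (q : ℝ × ℝ) {a b : ℝ≥0∞}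
    (h1 : optCost x (some q) ≤ a) (h2 : optCost (some q) z ≤ b) :
    optCost x z ≤ a + b := by
  cases x with
  | none =>
    cases z with
    | none => simp [optCost]
    | some r =>
      have h1' : optCost (some q) none ≤ a := by rwa [optCost_symm]
      have h2' : optCost (some r) (some q) ≤ b := by rwa [optCost_symm]
      have h3 := (optCost_none_le (some r) (some q)).trans (add_le_add h2' h1')
      rw [optCost_symm none (some r)]
      exact h3.trans (le_of_eq (add_comm b a))
  | some p =>
    cases z with
    | none =>
      calc optCost (some p) none ≤ optCost (some p) (some q) + optCost (some q) none :=
            optCost_none_le _ _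
        _ ≤ a + b := add_le_add h1 h2
    | some r =>
      refine le_trans ?_ (add_le_add h1 h2)
      simp only [optCost]
      refine le_trans (ENNReal.ofReal_le_ofReal ?_) ENNReal.ofReal_add_le
      have t1 : |p.1 - r.1| ≤ |p.1 - q.1| + |q.1 - r.1| := abs_sub_le _ _ _
      have t2 : |p.2 - r.2| ≤ |p.2 - q.2| + |q.2 - r.2| := abs_sub_le _ _ _
      have m1 : |p.1 - q.1| ≤ max |p.1 - q.1| |p.2 - q.2| := le_max_left _ _
      have m2 : |p.2 - q.2| ≤ max |p.1 - q.1| |p.2 - q.2| := le_max_right _ _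
      have m3 : |q.1 - r.1| ≤ max |q.1 - r.1| |q.2 - r.2| := le_max_left _ _
      have m4 : |q.2 - r.2| ≤ max |q.1 - r.1| |q.2 - r.2| := le_max_right _ _
      apply max_le <;> linarith

noncomputable def rcost (x y : Option (ℝ × ℝ)) : ℝ≥0∞ :=
  min (optCost x y) (max (optCost x none) (optCost none y))

theorem rcost_le_optCost (x y) : rcost x y ≤ optCost x y := min_le_left _ _

theorem rcost_triple {x y z : Option (ℝ × ℝ)} {a b : ℝ≥0∞}
    (h1 : optCost x y ≤ a) (h2 : optCost y z ≤ b) : rcost x z ≤ a + b := by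
  cases y with
  | some q => exact le_trans (rcost_le_optCost _ _) (optCost_triangle_some x z q h1 h2)
  | none =>
    refine le_trans (min_le_right _ _) (max_le ?_ ?_)
    · exact le_trans h1 le_self_add
    · exact le_trans h2 le_add_self



open scoped ENNReal Classical

theorem tsum_countP_option {β α : Type*} [DecidableEq α] [DecidableEq β] (M : Multiset β) (f : β → Option α) :
    ∑' x : α, (M.countP (fun c => f c = some x) : ℝ≥0∞) = M.countP (fun c => f c ≠ none) := by
  induction M using Multiset.induction with
  | empty => simp
  | cons b s ih =>
    simp only [Multiset.countP_cons]
    push_cast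
    rw [ENNReal.tsum_add, ih]
    congr 1
    cases hb : f b with
    | none => simp [hb]
    | some a =>
      simp only [hb, Option.some.injEq, ne_eq, reduceCtorEq, not_false_iff, if_true]
      rw [tsum_eq_single a (fun x hx => by simp [Ne.symm hx])]
      simp

theorem count_eq_countP {β : Type*} [DecidableEq β] (M : Multiset β) (c : β) :
    M.count c = M.countP (fun b => b = c) := by
  rw [Multiset.count]
  exact Multiset.countP_congr rfl fun b _ => by
    simp only [eq_iff_iff]; exact ⟨Eq.symm, Eq.symm⟩

theorem tsum_count_fst {α γ : Type*} [DecidableEq α] [DecidableEq γ]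
    (M : Multiset (α × Option γ)) (x : α) :
    ∑' q : Option γ, (M.count (x, q) : ℝ≥0∞) = M.countP (fun c => c.1 = x) := by
  refine Eq.trans (tsum_congr fun q => ?_)
    ((tsum_countP_option M (fun c => if c.1 = x then some c.2 else none)).trans
      (congrArg _ (Multiset.countP_congr rfl fun b _ => by
        by_cases hb : b.1 = x <;> simp [hb])))
  exact congrArg _ ((count_eq_countP M (x, q)).trans
    (Multiset.countP_congr rfl fun b _ => by
      by_cases hb : b.1 = x <;> simp [hb, Prod.ext_iff, eq_iff_iff] <;> tauto))

theorem tsum_count_snd {α γ : Type*} [DecidableEq α] [DecidableEq γ]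
    (M : Multiset (Option γ × α)) (x : α) :
    ∑' q : Option γ, (M.count (q, x) : ℝ≥0∞) = M.countP (fun c => c.2 = x) := by
  refine Eq.trans (tsum_congr fun q => ?_)
    ((tsum_countP_option M (fun c => if c.2 = x then some c.1 else none)).trans
      (congrArg _ (Multiset.countP_congr rfl fun b _ => by
        by_cases hb : b.2 = x <;> simp [hb])))
  exact congrArg _ ((count_eq_countP M (q, x)).trans
    (Multiset.countP_congr rfl fun b _ => by
      by_cases hb : b.2 = x <;> simp [hb, Prod.ext_iff, eq_iff_iff] <;> tauto))

theorem tsum_count_some {γ : Type*} [DecidableEq γ] (M : Multiset (Option γ)) :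
    ∑' p : γ, (M.count (some p) : ℝ≥0∞) = M.countP (fun c => c ≠ none) := by
  refine Eq.trans (tsum_congr fun q => ?_)
    ((tsum_countP_option M id).trans
      (congrArg _ (Multiset.countP_congr rfl fun b _ => by simp)))
  exact congrArg _ ((count_eq_countP M (some q)).trans
    (Multiset.countP_congr rfl fun b _ => by simp [eq_iff_iff, eq_comm]))

theorem count_repl_sum {β : Type*} [DecidableEq β] (S : Finset β) (g : β → ℕ) (c : β) :
    (S.sum fun b => Multiset.replicate (g b) b).count c = if c ∈ S then g c else 0 := by
  rw [Multiset.count_sum']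
  rw [Finset.sum_congr rfl (fun b _ => Multiset.count_replicate c b (g b))]
  simp [Finset.sum_ite_eq' S c g]

theorem countP_finset_sum {β ι : Type*} (S : Finset ι) (f : ι → Multiset β)
    (p : β → Prop) [DecidablePred p] :
    (S.sum f).countP p = S.sum fun i => (f i).countP p := by
  induction S using Finset.induction with
  | empty => simp
  | insert a s h ih => simp [Finset.sum_insert h, Multiset.countP_add, ih]

theorem countP_mono_pred {β : Type*} (M : Multiset β) (p q : β → Prop)
    [DecidablePred p] [DecidablePred q] (h : ∀ b ∈ M, p b → q b) :
    M.countP p ≤ M.countP q := by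
  induction M using Multiset.induction with
  | empty => simp
  | cons b s ih =>
    simp only [Multiset.countP_cons]
    have h1 : s.countP p ≤ s.countP q := ih fun x hx => h x (Multiset.mem_cons_of_mem hx)
    have h2 : (if p b then 1 else 0) ≤ (if q b then 1 else 0) := by
      by_cases hb : p b
      · simp [hb, h b (Multiset.mem_cons_self b s) hb]
      · simp [hb]
    omega

theorem ofFn_get_cast {α : Type*} (l : List α) (K : ℕ) (h : l.length = K) :
    List.ofFn (fun i : Fin K => l.get (Fin.cast h.symm i)) = l := by
  subst h
  simpa using List.ofFn_get l

theorem exists_enum_fun {α : Type*} (M : Multiset α) (pad : α) (K : ℕ) (h : M.card ≤ K) :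
    ∃ v : Fin K → α,
      Multiset.map v Finset.univ.val = M + Multiset.replicate (K - M.card) pad := by
  set M' := M + Multiset.replicate (K - M.card) pad with hM'
  have hlen : M'.toList.length = K := by
    simp [hM', Multiset.length_toList, Nat.add_sub_cancel' h]
  refine ⟨fun i => M'.toList.get (Fin.cast hlen.symm i), ?_⟩
  rw [Fin.univ_val_map, ofFn_get_cast M'.toList K hlen]
  exact Multiset.coe_toList M'

section P3
open scoped Classical

theorem card_finset_sum {β ι : Type*} (S : Finset ι) (f : ι → Multiset β) :
    (S.sum f).card = S.sum fun i => (f i).card := by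
  induction S using Finset.induction with
  | empty => simp
  | insert a s h ih => simp [Finset.sum_insert h, ih]

theorem barcode_finite {N : ℕ} {A : ExtBarcode} (hA : A.memBN N) : A.IsFinite := by
  by_contra hinf
  rw [ExtBarcode.IsFinite, ← Set.not_infinite, not_not] at hinf
  obtain ⟨t, ht, hcard⟩ := hinf.exists_subset_card_eq (N + 1)
  have h1 : (t.card : ℝ≥0∞) ≤ ∑ p ∈ t, (A.mult p : ℝ≥0∞) := by
    rw [Finset.card_eq_sum_ones t]
    push_cast
    apply Finset.sum_le_sum
    intro p hp
    have := ht hp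
    simp only [Set.mem_setOf_eq] at this
    exact_mod_cast Nat.one_le_iff_ne_zero.mpr this
  have h2 : (∑ p ∈ t, (A.mult p : ℝ≥0∞)) ≤ A.card := ENNReal.sum_le_tsum t
  have h3 : ((N + 1 : ℕ) : ℝ≥0∞) ≤ (N : ℝ≥0∞) := by
    rw [← hcard]; exact le_trans h1 (le_trans h2 hA)
  exact absurd (Nat.cast_le.mp h3) (by omega)

theorem exists_multiset (A : ExtBarcode) (hfin : A.IsFinite) :
    ∃ MA : Multiset (ℝ × ℝ), (∀ p, MA.count p = A.mult p) ∧ (MA.card : ℝ≥0∞) = A.card := by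
  refine ⟨hfin.toFinset.sum fun p => Multiset.replicate (A.mult p) p, fun p => ?_, ?_⟩
  · rw [count_repl_sum]
    by_cases hp : A.mult p = 0
    · simp [hp]
    · rw [if_pos ((Set.Finite.mem_toFinset (hs := hfin)).mpr hp)]
  · rw [card_finset_sum]
    simp only [Multiset.card_replicate]
    rw [ExtBarcode.card, tsum_eq_sum (s := hfin.toFinset) ?_]
    · push_cast; rfl
    · intro p hp
      replace hp := mt (Set.Finite.mem_toFinset (hs := hfin)).mpr hp
      simp only [Set.mem_setOf_eq, not_not] at hp
      simp [hp]

/-- `v` enumerates the barcode `A` using `K` slots. -/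
def enums {K : ℕ} (v : Fin K → Option (ℝ × ℝ)) (A : ExtBarcode) : Prop :=
  ∀ p : ℝ × ℝ, (Multiset.map v Finset.univ.val).count (some p) = A.mult p

theorem exists_enums {N : ℕ} (A : ExtBarcode) (hA : A.memBN N) (K : ℕ) (hK : N ≤ K) :
    ∃ v : Fin K → Option (ℝ × ℝ), enums v A := by
  obtain ⟨MA, hcount, hcard⟩ := exists_multiset A (barcode_finite hA)
  have hMA : MA.card ≤ K := by
    have : (MA.card : ℝ≥0∞) ≤ (K : ℝ≥0∞) := hcard.le.trans (hA.trans (Nat.cast_le.mpr hK))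
    exact_mod_cast this
  have hcard' : (MA.map some).card ≤ K := by rwa [Multiset.card_map]
  obtain ⟨v, hv⟩ := exists_enum_fun (MA.map some) none K hcard'
  refine ⟨v, fun p => ?_⟩
  rw [hv, Multiset.count_add, Multiset.count_replicate,
    Multiset.count_map_eq_count' some MA (Option.some_injective _), hcount]
  simp

theorem enums_comp_perm {K : ℕ} {A : ExtBarcode} {v : Fin K → Option (ℝ × ℝ)}
    (h : enums v A) (σ : Equiv.Perm (Fin K)) : enums (v ∘ σ) A := by
  intro p
  rw [← h p]
  congr 1
  rw [← Multiset.map_map]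
  congr 1
  have : Finset.univ.val.map (σ : Fin K → Fin K) = (Finset.univ.map σ.toEmbedding).val := by
    rfl
  rw [this, Finset.map_univ_equiv]

theorem enums_valid {K : ℕ} {A : ExtBarcode} {v : Fin K → Option (ℝ × ℝ)}
    (h : enums v A) {i : Fin K} {p : ℝ × ℝ} (hi : v i = some p) : IsBarInterval p := by
  apply A.isInterval
  rw [← h p]
  have : some p ∈ Multiset.map v Finset.univ.val :=
    Multiset.mem_map.mpr ⟨i, Finset.mem_univ i, hi⟩
  exact (Multiset.count_pos.mpr this).ne'

theorem count_map_univ {K : ℕ} {X : Type*} [DecidableEq X] (v : Fin K → X) (x : X) :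
    (Multiset.map v Finset.univ.val).count x = Nat.card {i // v i = x} := by
  rw [Nat.card_eq_fintype_card, count_eq_countP, Multiset.countP_map, Fintype.card_subtype,
    Finset.card_def, Finset.filter_val]

theorem enums_countP_card {K : ℕ} {A : ExtBarcode} {v : Fin K → Option (ℝ × ℝ)}
    (h : enums v A) :
    ((Multiset.countP (fun i => v i ≠ none) Finset.univ.val : ℕ) : ℝ≥0∞) = A.card := by
  have h1 := tsum_count_some (Multiset.map v Finset.univ.val)
  have h2 : ∑' p : ℝ × ℝ, ((Multiset.map v Finset.univ.val).count (some p) : ℝ≥0∞)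
      = A.card := by
    rw [ExtBarcode.card]; exact tsum_congr fun p => by rw [h p]
  rw [← h2, h1]
  congr 1
  rw [Multiset.countP_map, Multiset.countP_eq_card_filter]

theorem exists_perm_comp {α β : Type*} [Finite α] (f g : α → β)
    (h : ∀ b, Nat.card {a // f a = b} = Nat.card {a // g a = b}) :
    ∃ σ : Equiv.Perm α, f = g ∘ σ := by
  have e : ∀ c, { a // f a = c } ≃ { a // g a = c } := fun c => (Finite.card_eq.mp (h c)).some
  exact ⟨Equiv.ofFiberEquiv e, funext fun a => (Equiv.ofFiberEquiv_map e a).symm⟩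

theorem exists_perm_enums {K : ℕ} {A : ExtBarcode} {v w : Fin K → Option (ℝ × ℝ)}
    (hv : enums v A) (hw : enums w A) : ∃ σ : Equiv.Perm (Fin K), v = w ∘ σ := by
  apply exists_perm_comp
  intro b
  cases b with
  | some p => rw [← count_map_univ, ← count_map_univ, hv p, hw p]
  | none =>
    have hnv := Multiset.card_eq_countP_add_countP (p := fun i => (v i ≠ none))
      (Finset.univ.val (α := Fin K))
    have hnw := Multiset.card_eq_countP_add_countP (p := fun i => (w i ≠ none))
      (Finset.univ.val (α := Fin K))
    have hne : Multiset.countP (fun i => v i ≠ none) Finset.univ.val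
        = Multiset.countP (fun i => w i ≠ none) Finset.univ.val := by
      have := (enums_countP_card hv).trans (enums_countP_card hw).symm
      exact_mod_cast this
    have hvc : Nat.card {i // v i = none}
        = Multiset.countP (fun i => ¬ (v i ≠ none)) Finset.univ.val := by
      rw [Nat.card_eq_fintype_card, Fintype.card_subtype, Finset.card_def, Finset.filter_val,
        ← Multiset.countP_eq_card_filter]
      exact Multiset.countP_congr rfl fun i _ => by simp
    have hwc : Nat.card {i // w i = none}
        = Multiset.countP (fun i => ¬ (w i ≠ none)) Finset.univ.val := by
      rw [Nat.card_eq_fintype_card, Fintype.card_subtype, Finset.card_def, Finset.filter_val,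
        ← Multiset.countP_eq_card_filter]
      exact Multiset.countP_congr rfl fun i _ => by simp
    rw [hvc, hwc]
    omega

end P3

section P4
open scoped Classical

theorem countP_eq_sum_map {β : Type*} (M : Multiset β) (P : β → Prop) [DecidablePred P] :
    M.countP P = (M.map fun b => if P b then 1 else 0).sum := by
  induction M using Multiset.induction with
  | empty => simp
  | cons b s ih => simp [Multiset.countP_cons, ih, add_comm]

theorem countP_bind {ι β : Type*} (s : Multiset ι) (g : ι → Multiset β) (P : β → Prop)
    [DecidablePred P] :
    (s.bind g).countP P = (s.map fun i => (g i).countP P).sum := by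
  induction s using Multiset.induction with
  | empty => simp
  | cons b s ih => simp [Multiset.cons_bind, Multiset.countP_add, ih]

theorem count_map_univ' {K : ℕ} {X : Type*} [DecidableEq X] (v : Fin K → X) (x : X) :
    (Multiset.map v Finset.univ.val).count x
      = Multiset.countP (fun i => v i = x) Finset.univ.val := by
  rw [count_eq_countP, Multiset.countP_map, Multiset.countP_eq_card_filter]

theorem exists_enums_of_matching {N : ℕ} {A B : ExtBarcode} (hA : A.memBN N) (hB : B.memBN N)
    (C : BMatching A B) {ε : ℝ≥0∞} (hc : C.cost ≤ ε) {K : ℕ} (hK : 2 * N ≤ K) :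
    ∃ v w : Fin K → Option (ℝ × ℝ), enums v A ∧ enums w B ∧
      ∀ i, optCost (v i) (w i) ≤ ε := by
  have hAf := barcode_finite hA
  have hBf := barcode_finite hB
  have hSfin : {c : Option (ℝ × ℝ) × Option (ℝ × ℝ) | C.m c ≠ 0}.Finite := by
    apply Set.Finite.subset (Set.Finite.prod
      ((hAf.image some).insert none) ((hBf.image some).insert none))
    rintro ⟨x, y⟩ hc0
    simp only [Set.mem_setOf_eq] at hc0
    constructor
    · cases x with
      | none => exact Set.mem_insert _ _
      | some p =>
        refine Set.mem_insert_iff.mpr (Or.inr ⟨p, ?_, rfl⟩)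
        simp only [Set.mem_setOf_eq]
        intro h0
        have := C.left p
        rw [h0] at this
        simp only [Nat.cast_zero] at this
        have hz := ENNReal.tsum_eq_zero.mp this y
        simp only [Nat.cast_eq_zero] at hz
        exact hc0 hz
    · cases y with
      | none => exact Set.mem_insert _ _
      | some q =>
        refine Set.mem_insert_iff.mpr (Or.inr ⟨q, ?_, rfl⟩)
        simp only [Set.mem_setOf_eq]
        intro h0
        have := C.right q
        rw [h0] at this
        simp only [Nat.cast_zero] at this
        have hz := ENNReal.tsum_eq_zero.mp this x
        simp only [Nat.cast_eq_zero] at hz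
        exact hc0 hz
  set P := hSfin.toFinset.sum fun c => Multiset.replicate (C.m c) c with hP
  have hPcount : ∀ c, P.count c = C.m c := by
    intro c
    rw [hP, count_repl_sum]
    by_cases hc0 : C.m c = 0
    · simp [hc0]
    · rw [if_pos (by rw [Set.Finite.mem_toFinset]; exact hc0)]
  have hleft : ∀ p : ℝ × ℝ, (P.countP (fun c => c.1 = some p) : ℝ≥0∞) = A.mult p := by
    intro p
    rw [← tsum_count_fst P (some p), ← C.left p]
    exact tsum_congr fun q => by rw [hPcount]
  have hright : ∀ q : ℝ × ℝ, (P.countP (fun c => c.2 = some q) : ℝ≥0∞) = B.mult q := by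
    intro q
    rw [← tsum_count_snd P (some q), ← C.right q]
    exact tsum_congr fun x => by rw [hPcount]
  have hnn : (none, none) ∉ P := by
    rw [← Multiset.count_eq_zero, hPcount]
    exact C.not_both_empty
  have hfstcard : (P.countP (fun c => c.1 ≠ none) : ℝ≥0∞) = A.card := by
    rw [← tsum_countP_option P Prod.fst, ExtBarcode.card]
    exact tsum_congr fun p => hleft p
  have hsndcard : (P.countP (fun c => c.2 ≠ none) : ℝ≥0∞) = B.card := by
    rw [← tsum_countP_option P Prod.snd, ExtBarcode.card]
    exact tsum_congr fun q => hright q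
  have hfN : P.countP (fun c => c.1 ≠ none) ≤ N := by
    have : (P.countP (fun c => c.1 ≠ none) : ℝ≥0∞) ≤ (N : ℝ≥0∞) := hfstcard.le.trans hA
    exact_mod_cast this
  have hsN : P.countP (fun c => c.2 ≠ none) ≤ N := by
    have : (P.countP (fun c => c.2 ≠ none) : ℝ≥0∞) ≤ (N : ℝ≥0∞) := hsndcard.le.trans hB
    exact_mod_cast this
  have hmono : P.countP (fun c => ¬ (c.1 ≠ none)) ≤ P.countP (fun c => c.2 ≠ none) := by
    apply countP_mono_pred
    intro b hb h1
    by_contra h2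
    apply hnn
    have : b = (none, none) := Prod.ext (not_not.mp h1) h2
    rwa [this] at hb
  have hPcard : P.card ≤ K := by
    have := Multiset.card_eq_countP_add_countP (p := fun c => c.1 ≠ none) P
    omega
  obtain ⟨r, hr⟩ := exists_enum_fun P (none, none) K hPcard
  refine ⟨fun i => (r i).1, fun i => (r i).2, ?_, ?_, ?_⟩
  · intro p
    have hcomp : Multiset.map (fun i => (r i).1) Finset.univ.val
        = Multiset.map Prod.fst (Multiset.map r Finset.univ.val) := by
      rw [Multiset.map_map]; rfl
    rw [hcomp, hr, Multiset.map_add, Multiset.count_add, Multiset.map_replicate,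
      Multiset.count_replicate, if_neg (by simp)]
    have : (Multiset.map Prod.fst P).count (some p) = P.countP (fun c => c.1 = some p) := by
      rw [count_eq_countP, Multiset.countP_map, Multiset.countP_eq_card_filter]
    rw [this, add_zero]
    exact_mod_cast hleft p
  · intro q
    have hcomp : Multiset.map (fun i => (r i).2) Finset.univ.val
        = Multiset.map Prod.snd (Multiset.map r Finset.univ.val) := by
      rw [Multiset.map_map]; rfl
    rw [hcomp, hr, Multiset.map_add, Multiset.count_add, Multiset.map_replicate,
      Multiset.count_replicate, if_neg (by simp)]
    have : (Multiset.map Prod.snd P).count (some q) = P.countP (fun c => c.2 = some q) := by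
      rw [count_eq_countP, Multiset.countP_map, Multiset.countP_eq_card_filter]
    rw [this, add_zero]
    exact_mod_cast hright q
  · intro i
    show optCost (r i).1 (r i).2 ≤ ε
    have hmem : r i ∈ Multiset.map r Finset.univ.val :=
      Multiset.mem_map.mpr ⟨i, Finset.mem_univ i, rfl⟩
    rw [hr] at hmem
    rcases Multiset.mem_add.mp hmem with hmem | hmem
    · have hm : C.m (r i) ≠ 0 := by
        rw [← hPcount]
        exact (Multiset.count_pos.mpr hmem).ne'
      refine le_trans ?_ hc
      exact le_iSup₂ (f := fun c (_ : c ∈ {c | C.m c ≠ 0}) => optCost c.1 c.2) (r i) hm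
    · have := Multiset.eq_of_mem_replicate hmem
      rw [this]
      simp [optCost]

theorem bd_le_of_enums {A B : ExtBarcode} {K : ℕ} {v w : Fin K → Option (ℝ × ℝ)}
    (hv : enums v A) (hw : enums w B) {ε : ℝ≥0∞} (h : ∀ i, rcost (v i) (w i) ≤ ε) :
    bottleneckDist A B ≤ ε := by
  set spl : Fin K → Multiset (Option (ℝ × ℝ) × Option (ℝ × ℝ)) := fun i =>
    if v i = none ∧ w i = none then 0
    else if optCost (v i) (w i) ≤ ε then {(v i, w i)}
    else (v i, none) ::ₘ {(none, w i)} with hspl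
  have hsplit : ∀ i, ¬(v i = none ∧ w i = none) → ¬(optCost (v i) (w i) ≤ ε) →
      v i ≠ none ∧ w i ≠ none ∧ optCost (v i) none ≤ ε ∧ optCost none (w i) ≤ ε := by
    intro i h1 h2
    have hr := h i
    rw [rcost] at hr
    have hmax : max (optCost (v i) none) (optCost none (w i)) ≤ ε := by
      rcases min_cases (optCost (v i) (w i))
        (max (optCost (v i) none) (optCost none (w i))) with ⟨heq, _⟩ | ⟨heq, _⟩
      · exact absurd (heq ▸ hr) h2
      · rwa [heq] at hr
    have hvn : optCost (v i) none ≤ ε := le_trans (le_max_left _ _) hmax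
    have hwn : optCost none (w i) ≤ ε := le_trans (le_max_right _ _) hmax
    refine ⟨?_, ?_, hvn, hwn⟩
    · intro hv0
      exact h2 (by rw [hv0]; exact hwn)
    · intro hw0
      exact h2 (by rw [hw0]; exact hvn)
  set Q := Finset.univ.val.bind spl with hQ
  have hQfst : ∀ p : ℝ × ℝ, Q.countP (fun c => c.1 = some p) = A.mult p := by
    intro p
    rw [hQ, countP_bind]
    have hcongr : Multiset.map (fun i => (spl i).countP (fun c => c.1 = some p))
        Finset.univ.val
        = Multiset.map (fun i => if v i = some p then 1 else 0) Finset.univ.val := by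
      apply Multiset.map_congr rfl
      intro i _
      by_cases h1 : v i = none ∧ w i = none
      · rw [hspl]; simp only [if_pos h1, Multiset.countP_zero]
        rw [if_neg (by rw [h1.1]; simp)]
      · by_cases h2 : optCost (v i) (w i) ≤ ε
        · rw [hspl]; simp only [if_neg h1, if_pos h2]
          rw [show ({(v i, w i)} : Multiset _) = (v i, w i) ::ₘ 0 from rfl,
            Multiset.countP_cons, Multiset.countP_zero]
          by_cases h3 : v i = some p <;> simp [h3]
        · rw [hspl]; simp only [if_neg h1, if_neg h2]
          rw [Multiset.countP_cons,
            show ({(none, w i)} : Multiset (Option (ℝ × ℝ) × Option (ℝ × ℝ)))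
              = (none, w i) ::ₘ 0 from rfl, Multiset.countP_cons, Multiset.countP_zero]
          by_cases h3 : v i = some p <;> simp [h3]
    rw [hcongr, ← countP_eq_sum_map, ← count_map_univ', hv p]
  have hQsnd : ∀ q : ℝ × ℝ, Q.countP (fun c => c.2 = some q) = B.mult q := by
    intro q
    rw [hQ, countP_bind]
    have hcongr : Multiset.map (fun i => (spl i).countP (fun c => c.2 = some q))
        Finset.univ.val
        = Multiset.map (fun i => if w i = some q then 1 else 0) Finset.univ.val := by
      apply Multiset.map_congr rfl
      intro i _
      by_cases h1 : v i = none ∧ w i = none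
      · rw [hspl]; simp only [if_pos h1, Multiset.countP_zero]
        rw [if_neg (by rw [h1.2]; simp)]
      · by_cases h2 : optCost (v i) (w i) ≤ ε
        · rw [hspl]; simp only [if_neg h1, if_pos h2]
          rw [show ({(v i, w i)} : Multiset _) = (v i, w i) ::ₘ 0 from rfl,
            Multiset.countP_cons, Multiset.countP_zero]
          by_cases h3 : w i = some q <;> simp [h3]
        · rw [hspl]; simp only [if_neg h1, if_neg h2]
          rw [Multiset.countP_cons,
            show ({(none, w i)} : Multiset (Option (ℝ × ℝ) × Option (ℝ × ℝ)))
              = (none, w i) ::ₘ 0 from rfl, Multiset.countP_cons, Multiset.countP_zero]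
          by_cases h3 : w i = some q <;> simp [h3]
    rw [hcongr, ← countP_eq_sum_map, ← count_map_univ', hw q]
  have hQnn : Q.count (none, none) = 0 := by
    rw [Multiset.count_eq_zero]
    intro hmem
    obtain ⟨i, _, hi⟩ := Multiset.mem_bind.mp hmem
    by_cases h1 : v i = none ∧ w i = none
    · rw [hspl] at hi; simp only [if_pos h1] at hi; exact Multiset.notMem_zero _ hi
    · by_cases h2 : optCost (v i) (w i) ≤ ε
      · rw [hspl] at hi; simp only [if_neg h1, if_pos h2, Multiset.mem_singleton] at hi
        exact h1 ⟨congrArg Prod.fst hi.symm, congrArg Prod.snd hi.symm⟩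
      · obtain ⟨hv0, hw0, _, _⟩ := hsplit i h1 h2
        rw [hspl] at hi; simp only [if_neg h1, if_neg h2] at hi
        rcases Multiset.mem_cons.mp hi with hi | hi
        · exact hv0 (congrArg Prod.fst hi.symm)
        · rw [Multiset.mem_singleton] at hi
          exact hw0 (congrArg Prod.snd hi.symm)
  let CM : BMatching A B :=
    { m := fun c => Q.count c
      not_both_empty := hQnn
      left := fun p => by
        rw [← Nat.cast_inj (R := ℝ≥0∞) |>.mpr (hQfst p)]
        exact tsum_count_fst Q (some p)
      right := fun q => by
        rw [← Nat.cast_inj (R := ℝ≥0∞) |>.mpr (hQsnd q)]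
        exact tsum_count_snd Q (some q) }
  refine le_trans (iInf_le _ CM) ?_
  rw [BMatching.cost]
  apply iSup₂_le
  intro c hc
  have hmem : c ∈ Q := by
    rw [← Multiset.count_pos]
    exact Nat.pos_of_ne_zero hc
  obtain ⟨i, _, hi⟩ := Multiset.mem_bind.mp hmem
  by_cases h1 : v i = none ∧ w i = none
  · rw [hspl] at hi; simp only [if_pos h1] at hi; exact absurd hi (Multiset.notMem_zero _)
  · by_cases h2 : optCost (v i) (w i) ≤ ε
    · rw [hspl] at hi; simp only [if_neg h1, if_pos h2, Multiset.mem_singleton] at hi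
      rw [hi]; exact h2
    · obtain ⟨_, _, hvn, hwn⟩ := hsplit i h1 h2
      rw [hspl] at hi; simp only [if_neg h1, if_neg h2] at hi
      rcases Multiset.mem_cons.mp hi with hi | hi
      · rw [hi]; exact hvn
      · rw [Multiset.mem_singleton] at hi; rw [hi]; exact hwn

end P4

section P5

noncomputable def rr (k : ℕ) : ℝ := (2⁻¹ : ℝ) ^ k

noncomputable def ee (k : ℕ) : ℝ≥0∞ := ENNReal.ofReal (rr k)

noncomputable def tt (k : ℕ) : ℝ≥0∞ := ENNReal.ofReal (2 * rr k)

theorem rr_pos (k : ℕ) : 0 < rr k := by rw [rr]; positivity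

theorem rr_succ (k : ℕ) : 2 * rr (k + 1) = rr k := by
  rw [rr, rr, pow_succ]; ring

theorem ee_pos (k : ℕ) : 0 < ee k := ENNReal.ofReal_pos.mpr (rr_pos k)

theorem sum_rr_le {k m : ℕ} (h : k ≤ m) : (∑ j ∈ Finset.Ico k m, rr j) ≤ 2 * rr k := by
  have key : ∀ m, k ≤ m → (∑ j ∈ Finset.Ico k m, rr j) + 2 * rr m ≤ 2 * rr k := by
    intro m hm
    induction m, hm using Nat.le_induction with
    | base => simp
    | succ n hn ih =>
      rw [Finset.sum_Ico_succ_top hn]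
      have := rr_succ n
      linarith
  have := key m h
  have := rr_pos m
  linarith

theorem sum_ee_le (k m : ℕ) : (∑ j ∈ Finset.Ico k m, ee j) ≤ tt k := by
  rcases le_or_gt k m with h | h
  · rw [show (∑ j ∈ Finset.Ico k m, ee j)
        = ENNReal.ofReal (∑ j ∈ Finset.Ico k m, rr j) from
      (ENNReal.ofReal_sum_of_nonneg fun j _ => (rr_pos j).le).symm]
    exact ENNReal.ofReal_le_ofReal (sum_rr_le h)
  · rw [Finset.Ico_eq_empty (by omega)]
    simp

theorem chain_none_bound {x : ℕ → Option (ℝ × ℝ)}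
    (hx : ∀ k, optCost (x k) (x (k + 1)) ≤ ee k) :
    ∀ k m, k ≤ m → optCost (x k) none ≤ optCost (x m) none + ∑ j ∈ Finset.Ico k m, ee j := by
  intro k m hkm
  induction m, hkm using Nat.le_induction with
  | base => simp
  | succ n hn ih =>
    refine le_trans ih ?_
    rw [Finset.sum_Ico_succ_top hn]
    have h1 : optCost (x n) none ≤ optCost (x n) (x (n + 1)) + optCost (x (n + 1)) none :=
      optCost_none_le _ _
    have h2 : optCost (x n) (x (n + 1)) ≤ ee n := hx n
    calc optCost (x n) none + ∑ j ∈ Finset.Ico k n, ee j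
        ≤ (optCost (x (n+1)) none + ee n) + ∑ j ∈ Finset.Ico k n, ee j := by
          refine add_le_add (h1.trans ?_) le_rfl
          rw [add_comm]; exact add_le_add le_rfl h2
      _ = optCost (x (n+1)) none + (∑ j ∈ Finset.Ico k n, ee j + ee n) := by ring

theorem limit_of_chain (x : ℕ → Option (ℝ × ℝ))
    (hx : ∀ k, optCost (x k) (x (k + 1)) ≤ ee k)
    (hvalid : ∀ k p, x k = some p → IsBarInterval p) :
    ∃ (y : Option (ℝ × ℝ)) (K0 : ℕ), (∀ p, y = some p → IsBarInterval p) ∧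
      (y ≠ none → ∀ k, K0 ≤ k → x k ≠ none) ∧ (∀ k, K0 ≤ k → optCost (x k) y ≤ tt k) := by
  by_cases hinf : ∀ m, ∃ k, m ≤ k ∧ x k = none
  · refine ⟨none, 0, by simp, fun h => absurd rfl h, ?_⟩
    intro k _
    obtain ⟨m, hkm, hm⟩ := hinf k
    have h1 := chain_none_bound hx k m hkm
    rw [hm] at h1
    simp only [optCost, zero_add] at h1
    exact h1.trans (sum_ee_le k m)
  · push_neg at hinf
    obtain ⟨K, hK⟩ := hinf
    have hK' : ∀ k, K ≤ k → x k ≠ none := by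
      intro k hk
      intro h0
      exact (hK k hk h0).elim
    set p' : ℕ → ℝ × ℝ := fun n => (x (K + n)).getD (0, 0) with hp'def
    have hp' : ∀ n, x (K + n) = some (p' n) := by
      intro n
      cases h : x (K + n) with
      | none => exact absurd h (hK' _ (Nat.le_add_right K n))
      | some q => simp [hp'def, h]
    set a : ℕ → ℝ := fun n => (p' n).1 with ha
    set b : ℕ → ℝ := fun n => (p' n).2 with hb
    have hstep : ∀ n, |a n - a (n + 1)| ≤ rr (K + n) ∧ |b n - b (n + 1)| ≤ rr (K + n) := by
      intro n
      have h1 := hx (K + n)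
      rw [show K + n + 1 = K + (n + 1) from rfl, hp' n, hp' (n + 1)] at h1
      simp only [optCost] at h1
      rw [ee] at h1
      have h2 := (ENNReal.ofReal_le_ofReal_iff (rr_pos _).le).mp h1
      exact ⟨(le_max_left _ _).trans h2, (le_max_right _ _).trans h2⟩
    have hgeo : ∀ (f : ℕ → ℝ), (∀ n, |f n - f (n + 1)| ≤ rr (K + n)) →
        ∃ l : ℝ, Filter.Tendsto f Filter.atTop (nhds l) ∧
          ∀ n, |f n - l| ≤ 2 * rr (K + n) := by
      intro f hf
      have hcs : CauchySeq f := by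
        apply cauchySeq_of_le_geometric (2⁻¹ : ℝ) (rr K) (by norm_num)
        intro n
        rw [Real.dist_eq]
        calc |f n - f (n + 1)| ≤ rr (K + n) := hf n
          _ = rr K * 2⁻¹ ^ n := by rw [rr, pow_add]; rfl
      obtain ⟨l, hl⟩ := cauchySeq_tendsto_of_complete hcs
      refine ⟨l, hl, fun n => ?_⟩
      have hdist : ∀ m, n ≤ m → dist (f n) (f m) ≤ 2 * rr (K + n) := by
        intro m hm
        refine le_trans (dist_le_Ico_sum_of_dist_le hm
          (d := fun j => rr (K + j)) fun _ _ => by rw [Real.dist_eq]; exact hf _) ?_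
        have hfac : (∑ j ∈ Finset.Ico n m, rr (K + j)) = rr K * ∑ j ∈ Finset.Ico n m, rr j := by
          rw [Finset.mul_sum]
          exact Finset.sum_congr rfl fun j _ => by rw [rr, rr, rr, pow_add]
        rw [hfac]
        calc rr K * ∑ j ∈ Finset.Ico n m, rr j ≤ rr K * (2 * rr n) :=
              mul_le_mul_of_nonneg_left (sum_rr_le hm) (rr_pos K).le
          _ = 2 * rr (K + n) := by rw [rr, rr, rr, pow_add]; ring
      have htd : Filter.Tendsto (fun m => dist (f n) (f m)) Filter.atTop
          (nhds (dist (f n) l)) := (tendsto_const_nhds.dist hl)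
      have := le_of_tendsto htd (Filter.eventually_atTop.mpr ⟨n, hdist⟩)
      rwa [Real.dist_eq] at this
    obtain ⟨α, hαt, hαb⟩ := hgeo a fun n => (hstep n).1
    obtain ⟨β, hβt, hβb⟩ := hgeo b fun n => (hstep n).2
    have hab : ∀ n, a n < b n := fun n => (hvalid _ _ (hp' n)).2
    have h0a : ∀ n, 0 ≤ a n := fun n => (hvalid _ _ (hp' n)).1
    have hαβ : α ≤ β := le_of_tendsto_of_tendsto' hαt hβt fun n => (hab n).le
    have h0α : (0 : ℝ) ≤ α := ge_of_tendsto' hαt h0a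
    by_cases hlt : α < β
    · refine ⟨some (α, β), K, ?_, fun _ k hk => hK' k hk, ?_⟩
      · rintro p hp
        injection hp with hp
        rw [← hp]
        exact ⟨h0α, hlt⟩
      · intro k hk
        obtain ⟨n, rfl⟩ := Nat.exists_eq_add_of_le hk
        rw [hp' n]
        simp only [optCost]
        rw [tt]
        apply ENNReal.ofReal_le_ofReal
        exact max_le (hαb n) (hβb n)
    · refine ⟨none, K, by simp, fun h => absurd rfl h, ?_⟩
      have heq : α = β := le_antisymm hαβ (not_lt.mp hlt)
      intro k hk
      obtain ⟨n, rfl⟩ := Nat.exists_eq_add_of_le hk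
      rw [hp' n]
      simp only [optCost]
      rw [tt]
      apply ENNReal.ofReal_le_ofReal
      have h1 := abs_le.mp (hαb n)
      have h2 := abs_le.mp (hβb n)
      have := rr_pos (K + n)
      rw [heq] at h1
      linarith [h1.1, h1.2, h2.1, h2.2]

end P5

theorem exists_seq_rec {α : Type*} (P : ℕ → α → Prop) (R : ℕ → α → α → Prop)
    (h0 : ∃ x, P 0 x) (hs : ∀ k x, P k x → ∃ y, P (k + 1) y ∧ R k x y) :
    ∃ f : ℕ → α, (∀ k, P k (f k)) ∧ ∀ k, R k (f k) (f (k + 1)) := by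
  classical
  let g : ∀ k : ℕ, { x : α // P k x } := fun k =>
    Nat.rec ⟨h0.choose, h0.choose_spec⟩
      (fun k ih => ⟨(hs k ih.1 ih.2).choose, (hs k ih.1 ih.2).choose_spec.1⟩) k
  exact ⟨fun k => (g k).1, fun k => (g k).2,
    fun k => (hs k (g k).1 (g k).2).choose_spec.2⟩


/-- for each `N ≥ 0`, the space `B_N` of barcodes with at most `N`
intervals is complete under the bottleneck metric: every Cauchy sequence in `B_N`
converges (in the bottleneck metric) to a barcode in `B_N`. -/
theorem BN_complete (N : ℕ) (u : ℕ → ExtBarcode) (hu : ∀ n, (u n).memBN N)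
    (hcauchy : ∀ ε : ℝ≥0∞, 0 < ε →
      ∃ M : ℕ, ∀ m n : ℕ, M ≤ m → M ≤ n → bottleneckDist (u m) (u n) < ε) :
    ∃ L : ExtBarcode, L.memBN N ∧
      ∀ ε : ℝ≥0∞, 0 < ε → ∃ M : ℕ, ∀ n : ℕ, M ≤ n → bottleneckDist (u n) L < ε := by
  classical
  have hsel : ∀ k : ℕ, ∃ M : ℕ, ∀ m n : ℕ, M ≤ m → M ≤ n →
      bottleneckDist (u m) (u n) < ee k := fun k => hcauchy (ee k) (ee_pos k)
  choose ψ hψ using hsel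
  set φ : ℕ → ℕ := fun k => (Finset.range (k + 1)).sup ψ with hφ
  have hφk : ∀ k, ψ k ≤ φ k := fun k => Finset.le_sup (Finset.mem_range.mpr (by omega))
  have hφmono : Monotone φ := fun i j hij =>
    Finset.sup_mono (Finset.range_subset_range.mpr (by omega))
  have hd : ∀ k m n, φ k ≤ m → φ k ≤ n → bottleneckDist (u m) (u n) < ee k :=
    fun k m n hm hn => hψ k m n ((hφk k).trans hm) ((hφk k).trans hn)
  set a : ℕ → ExtBarcode := fun k => u (φ k) with ha'
  have ha : ∀ k, (a k).memBN N := fun k => hu _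
  set K := 2 * N with hKdef
  have hKN : N ≤ K := by omega
  obtain ⟨v0, hv0⟩ := exists_enums (a 0) (ha 0) K hKN
  have hstep : ∀ (k : ℕ) (v : Fin K → Option (ℝ × ℝ)), enums v (a k) →
      ∃ w, enums w (a (k + 1)) ∧ ∀ i, optCost (v i) (w i) ≤ ee k := by
    intro k v hv
    have hdk : bottleneckDist (a k) (a (k + 1)) < ee k :=
      hd k (φ k) (φ (k + 1)) le_rfl (hφmono (by omega))
    rw [bottleneckDist] at hdk
    obtain ⟨C, hC⟩ := iInf_lt_iff.mp hdk
    obtain ⟨v', w', hv', hw', hpt⟩ :=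
      exists_enums_of_matching (ha k) (ha (k + 1)) C hC.le (le_rfl : 2 * N ≤ K)
    obtain ⟨σ, hσ⟩ := exists_perm_enums hv' hv
    refine ⟨w' ∘ σ.symm, enums_comp_perm hw' σ.symm, fun i => ?_⟩
    have hvi : v i = v' (σ.symm i) := by
      rw [hσ]; simp
    rw [hvi]
    exact hpt (σ.symm i)
  obtain ⟨f, hfP, hfR⟩ := exists_seq_rec (fun k v => enums v (a k))
    (fun k v w => ∀ i, optCost (v i) (w i) ≤ ee k) ⟨v0, hv0⟩ hstep
  have hlim : ∀ i : Fin K, ∃ (y : Option (ℝ × ℝ)) (K0 : ℕ),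
      (∀ p, y = some p → IsBarInterval p) ∧ (y ≠ none → ∀ k, K0 ≤ k → f k i ≠ none) ∧
      (∀ k, K0 ≤ k → optCost (f k i) y ≤ tt k) :=
    fun i => limit_of_chain (fun k => f k i) (fun k => hfR k i)
      (fun k p hp => enums_valid (hfP k) hp)
  choose Li K0 hLvalid hLnone hLbound using hlim
  have hLfin : {p : ℝ × ℝ | (Multiset.map Li Finset.univ.val).count (some p) ≠ 0}.Finite := by
    apply Set.Finite.subset ((Set.finite_range Li).preimage (Option.some_injective _).injOn)
    intro p hp
    simp only [Set.mem_setOf_eq] at hp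
    have hmem : some p ∈ Multiset.map Li Finset.univ.val :=
      Multiset.count_pos.mp (Nat.pos_of_ne_zero hp)
    obtain ⟨i, _, hi⟩ := Multiset.mem_map.mp hmem
    exact ⟨i, hi⟩
  let L : ExtBarcode :=
    { mult := fun p => (Multiset.map Li Finset.univ.val).count (some p)
      isInterval := by
        intro p hp
        have hmem : some p ∈ Multiset.map Li Finset.univ.val :=
          Multiset.count_pos.mp (Nat.pos_of_ne_zero hp)
        obtain ⟨i, _, hi⟩ := Multiset.mem_map.mp hmem
        exact hLvalid i p hi
      finite_long := fun ε hε => hLfin.subset fun p hp => hp.1 }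
  have hLenum : enums Li L := fun p => rfl
  have hkk : ∀ i : Fin K, K0 i ≤ Finset.univ.sup K0 :=
    fun i => Finset.le_sup (Finset.mem_univ i)
  set kk := Finset.univ.sup K0 with hkkdef
  have hLcard : L.memBN N := by
    rw [ExtBarcode.memBN]
    have h1 := enums_countP_card hLenum
    have h2 := enums_countP_card (hfP kk)
    have h3 : Multiset.countP (fun i => Li i ≠ none) Finset.univ.val
        ≤ Multiset.countP (fun i => f kk i ≠ none) Finset.univ.val :=
      countP_mono_pred _ _ _ fun i _ hL => hLnone i hL kk (hkk i)
    rw [← h1]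
    calc ((Multiset.countP (fun i => Li i ≠ none) Finset.univ.val : ℕ) : ℝ≥0∞)
        ≤ ((Multiset.countP (fun i => f kk i ≠ none) Finset.univ.val : ℕ) : ℝ≥0∞) :=
          Nat.cast_le.mpr h3
      _ = (a kk).card := h2
      _ ≤ (N : ℝ≥0∞) := ha kk
  refine ⟨L, hLcard, ?_⟩
  intro ε hε
  have hεchoice : ∃ k : ℕ, kk ≤ k ∧ ENNReal.ofReal (3 * rr k) < ε := by
    rcases eq_or_ne ε ⊤ with rfl | hεt
    · exact ⟨kk, le_rfl, ENNReal.ofReal_lt_top⟩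
    · have hpos : 0 < ε.toReal := ENNReal.toReal_pos hε.ne' hεt
      obtain ⟨n0, hn0⟩ := exists_pow_lt_of_lt_one (x := ε.toReal / 3) (y := (2⁻¹ : ℝ))
        (by positivity) (by norm_num)
      refine ⟨max n0 kk, le_max_right _ _, ?_⟩
      rw [ENNReal.ofReal_lt_iff_lt_toReal (by have := rr_pos (max n0 kk); linarith) hεt]
      have hmono2 : rr (max n0 kk) ≤ rr n0 :=
        pow_le_pow_of_le_one (by norm_num) (by norm_num) (le_max_left _ _)
      have hlt : rr n0 < ε.toReal / 3 := hn0
      linarith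
  obtain ⟨k, hkkk, hkε⟩ := hεchoice
  refine ⟨φ k, fun n hn => ?_⟩
  have hdn : bottleneckDist (u n) (a k) < ee k := hd k n (φ k) hn le_rfl
  rw [bottleneckDist] at hdn
  obtain ⟨C, hC⟩ := iInf_lt_iff.mp hdn
  obtain ⟨v, w, hv, hw, hpt⟩ :=
    exists_enums_of_matching (hu n) (ha k) C hC.le (le_rfl : 2 * N ≤ K)
  obtain ⟨σ, hσ⟩ := exists_perm_enums hw (hfP k)
  have hptL : ∀ i, rcost ((v ∘ σ.symm) i) (Li i) ≤ ee k + tt k := by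
    intro i
    apply rcost_triple (y := f k i)
    · have h1 : f k i = w (σ.symm i) := by rw [hσ]; simp
      rw [h1]
      exact hpt (σ.symm i)
    · exact hLbound i k (le_trans (hkk i) hkkk)
  have hfinal := bd_le_of_enums (enums_comp_perm hv σ.symm) hLenum hptL
  refine lt_of_le_of_lt hfinal ?_
  have hsum : ee k + tt k = ENNReal.ofReal (3 * rr k) := by
    rw [ee, tt, ← ENNReal.ofReal_add (rr_pos k).le (by have := rr_pos k; linarith)]
    congr 1; ring
  rw [hsum]
  exact hkε
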